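/- Let m ≥ 2, γ a primitive m-th root of unity in k, φ_t(x) = 1 - γ^{-t-1} x^d, and let 1 ≤ i ≤ m-1. Then ∑_{j=0}^{m-1} γ^{-ij} · φ_j φ_{j+1} ⋯ φ_{j+m-2-i} = 0 (indices mod m, the product having m-1-i factors). -/

import Mathlib

open Polynomial Finset

lemma geom_zero' {k : Type*} [Field k] {ζ : k} {m : ℕ} (h1 : ζ ≠ 1) (hm : ζ ^ m = 1) :
    ∑ j ∈ Finset.range m, ζ ^ j = 0 := by
  have h := geom_sum_mul ζ m
  rw [hm, sub_self] at h
  rcases mul_eq_zero.mp h with h | h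
  · exact h
  · exact absurd (sub_eq_zero.mp h) h1

lemma prod_term' {k : Type*} [Field k] (δ : k) (d j : ℕ) (u : Finset ℕ) :
    ∏ r ∈ u, (-(Polynomial.C (δ ^ (j + r + 1)) * Polynomial.X ^ d)) =
      (-1 : Polynomial k) ^ u.card *
        Polynomial.C (δ ^ (u.card * j + ∑ r ∈ u, (r + 1))) * Polynomial.X ^ (d * u.card) := by
  classical
  induction u using Finset.induction_on with
  | empty => simp
  | @insert a s h ih =>
    rw [Finset.prod_insert h, ih, Finset.card_insert_of_notMem h, Finset.sum_insert h]
    have hs : δ ^ (j + a + 1) * δ ^ (s.card * j + ∑ r ∈ s, (r + 1))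
        = δ ^ ((s.card + 1) * j + (a + 1 + ∑ r ∈ s, (r + 1))) := by
      rw [← pow_add]; congr 1; ring
    have hC := congrArg Polynomial.C hs
    rw [Polynomial.C_mul] at hC
    have hX : (Polynomial.X : Polynomial k) ^ d * Polynomial.X ^ (d * s.card)
        = Polynomial.X ^ (d * (s.card + 1)) := by rw [← pow_add]; ring_nf
    rw [← hC, ← hX]
    ring

/-- for 1 ≤ i ≤ m-1, ∑_{j=0}^{m-1} γ^{-ij} φ_j φ_{j+1} ⋯ φ_{j+m-2-i} = 0. -/
theorem stmt_6 {k : Type*} [Field k] [IsAlgClosed k] [CharZero k]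
    (m d : ℕ) (hm : 2 ≤ m) (hd : 1 ≤ d) (γ : k) (hγ : IsPrimitiveRoot γ m)
    (i : ℕ) (hi1 : 1 ≤ i) (hi2 : i ≤ m - 1) :
    ∑ j ∈ Finset.range m, Polynomial.C (γ ^ (-((i : ℤ) * (j : ℤ)))) *
      ∏ r ∈ Finset.range (m - 1 - i),
        ((1 : Polynomial k) - Polynomial.C (γ ^ (-((j : ℤ) + (r : ℤ)) - 1)) * Polynomial.X ^ d)
      = 0 := by
  classical
  set δ := γ⁻¹ with hδdef
  have hδ : IsPrimitiveRoot δ m := hγ.inv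
  have key1 : ∀ a : ℕ, γ ^ (-(a : ℤ)) = δ ^ a := fun a => by
    rw [zpow_neg, zpow_natCast, ← inv_pow]
  set n := m - 1 - i with hn
  have step1 : ∑ j ∈ Finset.range m, Polynomial.C (γ ^ (-((i : ℤ) * (j : ℤ)))) *
      ∏ r ∈ Finset.range n,
        ((1 : Polynomial k) - Polynomial.C (γ ^ (-((j : ℤ) + (r : ℤ)) - 1)) * Polynomial.X ^ d)
      = ∑ j ∈ Finset.range m, Polynomial.C (δ ^ (i * j)) *
      ∏ r ∈ Finset.range n,
        ((1 : Polynomial k) - Polynomial.C (δ ^ (j + r + 1)) * Polynomial.X ^ d) := by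
    refine Finset.sum_congr rfl fun j _ => ?_
    congr 1
    · rw [show (-((i : ℤ) * (j : ℤ))) = -((i * j : ℕ) : ℤ) by push_cast; ring, key1]
    · refine Finset.prod_congr rfl fun r _ => ?_
      rw [show (-((j : ℤ) + (r : ℤ)) - 1) = -((j + r + 1 : ℕ) : ℤ) by push_cast; ring, key1]
  rw [step1]
  -- expand the product
  have step2 : ∀ j : ℕ, ∏ r ∈ Finset.range n,
      ((1 : Polynomial k) - Polynomial.C (δ ^ (j + r + 1)) * Polynomial.X ^ d)
      = ∑ t ∈ (Finset.range n).powerset,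
          ∏ r ∈ Finset.range n \ t, (-(Polynomial.C (δ ^ (j + r + 1)) * Polynomial.X ^ d)) := by
    intro j
    have : ∀ r : ℕ, (1 : Polynomial k) - Polynomial.C (δ ^ (j + r + 1)) * Polynomial.X ^ d
        = (1 : Polynomial k) + (-(Polynomial.C (δ ^ (j + r + 1)) * Polynomial.X ^ d)) := by
      intro r; ring
    simp_rw [this]
    rw [Finset.prod_add]
    refine Finset.sum_congr rfl fun t _ => ?_
    simp
  simp_rw [step2, Finset.mul_sum]
  rw [Finset.sum_comm]
  refine Finset.sum_eq_zero fun t ht => ?_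
  set u := Finset.range n \ t with hu
  set c := u.card with hc
  have hcn : c ≤ n := by
    rw [hc, hu]
    exact le_trans (Finset.card_le_card (Finset.sdiff_subset)) (by simp)
  have hicm : i + c < m := by omega
  have hzeta : (δ ^ (i + c)) ≠ 1 :=
    hδ.pow_ne_one_of_pos_of_lt (by omega) hicm
  have hzetam : (δ ^ (i + c)) ^ m = 1 := by
    rw [← pow_mul, mul_comm, pow_mul, hδ.pow_eq_one, one_pow]
  have hsum0 : ∑ j ∈ Finset.range m, (δ ^ (i + c)) ^ j = 0 := geom_zero' hzeta hzetam
  have termeq : ∀ j : ℕ, Polynomial.C (δ ^ (i * j)) *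
      ∏ r ∈ u, (-(Polynomial.C (δ ^ (j + r + 1)) * Polynomial.X ^ d))
      = Polynomial.C ((δ ^ (i + c)) ^ j) *
        ((-1 : Polynomial k) ^ c * Polynomial.C (δ ^ (∑ r ∈ u, (r + 1))) *
          Polynomial.X ^ (d * c)) := by
    intro j
    rw [prod_term' δ d j u, ← hc]
    have hs : δ ^ (i * j) * δ ^ (c * j + ∑ r ∈ u, (r + 1))
        = (δ ^ (i + c)) ^ j * δ ^ (∑ r ∈ u, (r + 1)) := by
      rw [← pow_add, ← pow_mul, ← pow_add]; congr 1; ring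
    have hC := congrArg Polynomial.C hs
    rw [Polynomial.C_mul, Polynomial.C_mul] at hC
    linear_combination ((-1 : Polynomial k) ^ c * Polynomial.X ^ (d * c)) * hC
  simp_rw [termeq]
  rw [← Finset.sum_mul]
  have hz : ∑ j ∈ Finset.range m, Polynomial.C ((δ ^ (i + c)) ^ j) = 0 := by
    rw [← map_sum, hsum0, map_zero]
  rw [hz, zero_mul]
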